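/- Let p < q in A_d and let S_{p,q} be the subgroup generated by L_p and L_q. Then every B ∈ S_{p,q} fixes e_r for all r ∉ {p,q}, and the map B ↦ B♯ = [[B_{pp}, B_{pq}],[B_{qp}, B_{qq}]] is a group isomorphism from S_{p,q} onto SL(2,ℤ). -/

import Mathlib

open Matrix

/-- The matrix of the operator `L_p`. -/
def L (d : ℕ) (p : Fin d) : Matrix (Fin d) (Fin d) ℤ :=
  Matrix.of fun r q => if q = p then (if r < p then -1 else 1) else (if r = q then 1 else 0)

/-- The subgroup `S_{p,q}` of `SL(ℤ^{A_d})` generated by `L_p` and `L_q`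
(realized inside the units of the matrix ring). -/
def Spq (d : ℕ) (p q : Fin d) : Subgroup (Matrix (Fin d) (Fin d) ℤ)ˣ :=
  Subgroup.closure {u : (Matrix (Fin d) (Fin d) ℤ)ˣ |
    (u : Matrix (Fin d) (Fin d) ℤ) = L d p ∨ (u : Matrix (Fin d) (Fin d) ℤ) = L d q}

open ModularGroup Matrix.SpecialLinearGroup
open scoped MatrixGroups

/-- `[[1,0],[1,1]]` as an element of `SL(2,ℤ)`. -/
def AA : SL(2, ℤ) := ⟨!![1, 0; 1, 1], by norm_num [Matrix.det_fin_two_of]⟩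

/-- `[[1,-1],[0,1]]` as an element of `SL(2,ℤ)`. -/
def BB : SL(2, ℤ) := ⟨!![1, -1; 0, 1], by norm_num [Matrix.det_fin_two_of]⟩

lemma BB_eq : BB = T⁻¹ := by
  apply Subtype.ext
  rw [coe_T_inv]; rfl

lemma S_eq : S = BB * AA * BB := by
  apply Subtype.ext
  rw [coe_mul, coe_mul, coe_S]
  show _ = (!![1, -1; 0, 1] : Matrix (Fin 2) (Fin 2) ℤ) * !![1, 0; 1, 1] * !![1, -1; 0, 1]
  norm_num [Matrix.mul_fin_two]

/-- `SL(2,ℤ)` is generated by `AA` and `BB`. -/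
lemma closure_AA_BB : Subgroup.closure ({AA, BB} : Set SL(2, ℤ)) = ⊤ := by
  set H := Subgroup.closure ({AA, BB} : Set SL(2, ℤ)) with hH
  have hA : AA ∈ H := Subgroup.subset_closure (by simp)
  have hB : BB ∈ H := Subgroup.subset_closure (by simp)
  have hT : T ∈ H := by
    have h : T = BB⁻¹ := by rw [BB_eq, inv_inv]
    rw [h]; exact inv_mem hB
  have hS : S ∈ H := by rw [S_eq]; exact mul_mem (mul_mem hB hA) hB
  rw [eq_top_iff]
  intro g _
  suffices h : ∀ n : ℕ, ∀ g : SL(2, ℤ), (g.1 1 0).natAbs = n → g ∈ H from h _ g rfl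
  intro n
  induction n using Nat.strong_induction_on with
  | _ n IH =>
    intro g hg
    by_cases hc : g.1 1 0 = 0
    · have hdet : g.1 0 0 * g.1 1 1 = 1 := by
        have h2 := g.2
        rw [Matrix.det_fin_two] at h2
        rw [hc] at h2; linarith
      rcases Int.mul_eq_one_iff_eq_one_or_neg_one.mp hdet with ⟨ha, hd⟩ | ⟨ha, hd⟩
      · have h : g = T ^ (g.1 0 1) := by
          apply Subtype.ext
          rw [coe_T_zpow]
          ext i j
          fin_cases i <;> fin_cases j <;> simp [ha, hd, hc]
        rw [h]; exact zpow_mem hT _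
      · have h : g = S * S * T ^ (-(g.1 0 1)) := by
          apply Subtype.ext
          rw [coe_mul, coe_mul, coe_T_zpow, coe_S]
          ext i j
          rw [show (!![0,-1;1,0] : Matrix (Fin 2) (Fin 2) ℤ) * !![0,-1;1,0] * !![1, -g.1 0 1; 0, 1]
              = !![-1, g.1 0 1; 0, -1] by norm_num [Matrix.mul_fin_two]]
          fin_cases i <;> fin_cases j <;> simp [ha, hd, hc]
        rw [h]; exact mul_mem (mul_mem hS hS) (zpow_mem hT _)
    · set k : ℤ := g.1 0 0 / g.1 1 0 with hk
      set g' := S * T ^ (-k) * g with hg'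
      have h10 : g'.1 1 0 = g.1 0 0 % g.1 1 0 := by
        rw [hg', coe_mul, coe_mul, coe_T_zpow, coe_S]
        rw [Int.emod_def, hk]
        simp [Matrix.mul_apply, Fin.sum_univ_two]
        ring
      have hlt : (g'.1 1 0).natAbs < n := by
        rw [h10, ← hg]
        have h1 : 0 ≤ g.1 0 0 % g.1 1 0 := Int.emod_nonneg _ hc
        have h2 : g.1 0 0 % g.1 1 0 < |g.1 1 0| := Int.emod_lt_abs _ hc
        rw [Int.abs_eq_natAbs] at h2
        omega
      have hg'H : g' ∈ H := IH _ hlt g' rfl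
      have h : g = T ^ k * S⁻¹ * g' := by rw [hg']; group
      rw [h]; exact mul_mem (mul_mem (zpow_mem hT _) (inv_mem hS)) hg'H

section Emb
variable (d : ℕ) (p q : Fin d)

/-- Left factor of the rank-2 correction. -/
def Umat : Matrix (Fin d) (Fin 2) ℤ :=
  Matrix.of fun i k =>
    if k = 0 then (if i = p then 1 else if i = q then 0 else if i < q then 1 else -1)
    else (if i = q then 1 else if i = p then 0 else if i < p then -1 else 1)

/-- Right factor of the rank-2 correction. -/
def Vmat : Matrix (Fin 2) (Fin d) ℤ :=
  Matrix.of fun k j => if k = 0 then (if j = p then 1 else 0) else (if j = q then 1 else 0)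

/-- The multiplicative embedding of `2×2` matrices into `d×d` matrices. -/
def Emat (M : Matrix (Fin 2) (Fin 2) ℤ) : Matrix (Fin d) (Fin d) ℤ :=
  1 + Umat d p q * (M - 1) * Vmat d p q

variable {d p q}

lemma VU (hpq : p ≠ q) : Vmat d p q * Umat d p q = 1 := by
  ext k l
  rw [Matrix.mul_apply]
  fin_cases k <;> fin_cases l <;>
    simp only [Vmat, Umat, Matrix.of_apply, Fin.isValue, if_true, one_ne_zero, zero_ne_one,
      if_false, ite_mul, one_mul, zero_mul, Finset.sum_ite_eq', Finset.mem_univ,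
      Matrix.one_apply] <;>
    simp [hpq, hpq.symm]

lemma Emat_one : Emat d p q 1 = 1 := by simp [Emat]

lemma Emat_mul (hpq : p ≠ q) (M N : Matrix (Fin 2) (Fin 2) ℤ) :
    Emat d p q (M * N) = Emat d p q M * Emat d p q N := by
  have hVU : ∀ Y : Matrix (Fin 2) (Fin d) ℤ, Vmat d p q * (Umat d p q * Y) = Y := fun Y => by
    rw [← Matrix.mul_assoc, VU hpq, Matrix.one_mul]
  have key : M * N - 1 = (M - 1) + (N - 1) + (M - 1) * (N - 1) := by noncomm_ring
  simp only [Emat, key, Matrix.mul_add, Matrix.add_mul, Matrix.mul_one, Matrix.one_mul,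
    Matrix.mul_assoc, hVU]
  abel

lemma Emat_col (M : Matrix (Fin 2) (Fin 2) ℤ) {r : Fin d} (hrp : r ≠ p) (hrq : r ≠ q)
    (i : Fin d) : Emat d p q M i r = if i = r then 1 else 0 := by
  simp [Emat, Matrix.mul_apply, Fin.sum_univ_two, Vmat, hrp, hrq, Matrix.one_apply]

lemma Emat_pp (hpq : p ≠ q) (M : Matrix (Fin 2) (Fin 2) ℤ) : Emat d p q M p p = M 0 0 := by
  simp [Emat, Matrix.mul_apply, Fin.sum_univ_two, Vmat, Umat, hpq, hpq.symm, Matrix.one_apply,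
    Matrix.sub_apply, Matrix.one_apply]
  try ring

lemma Emat_pq (hpq : p ≠ q) (M : Matrix (Fin 2) (Fin 2) ℤ) : Emat d p q M p q = M 0 1 := by
  simp [Emat, Matrix.mul_apply, Fin.sum_univ_two, Vmat, Umat, hpq, hpq.symm, Matrix.one_apply,
    Matrix.sub_apply]
  try ring

lemma Emat_qp (hpq : p ≠ q) (M : Matrix (Fin 2) (Fin 2) ℤ) : Emat d p q M q p = M 1 0 := by
  simp [Emat, Matrix.mul_apply, Fin.sum_univ_two, Vmat, Umat, hpq, hpq.symm, Matrix.one_apply,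
    Matrix.sub_apply]
  try ring

lemma Emat_qq (hpq : p ≠ q) (M : Matrix (Fin 2) (Fin 2) ℤ) : Emat d p q M q q = M 1 1 := by
  simp [Emat, Matrix.mul_apply, Fin.sum_univ_two, Vmat, Umat, hpq, hpq.symm, Matrix.one_apply,
    Matrix.sub_apply]
  try ring

lemma Emat_A (hpq : p < q) : Emat d p q !![1, 0; 1, 1] = L d p := by
  have hne : p ≠ q := ne_of_lt hpq
  have hnlt : ¬ q < p := not_lt_of_gt hpq
  ext i j
  simp only [Emat, L, Matrix.add_apply, Matrix.mul_apply, Fin.sum_univ_two, Vmat, Umat,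
    Matrix.of_apply, Matrix.one_apply, Matrix.sub_apply]
  norm_num
  rcases eq_or_ne j p with hjp | hjp <;> rcases eq_or_ne j q with hjq | hjq <;>
    rcases eq_or_ne i p with hip | hip <;> rcases eq_or_ne i q with hiq | hiq <;>
      simp_all [lt_irrefl, hpq.not_gt]

lemma Emat_B (hpq : p < q) : Emat d p q !![1, -1; 0, 1] = L d q := by
  have hne : p ≠ q := ne_of_lt hpq
  ext i j
  simp only [Emat, L, Matrix.add_apply, Matrix.mul_apply, Fin.sum_univ_two, Vmat, Umat,
    Matrix.of_apply, Matrix.one_apply, Matrix.sub_apply]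
  norm_num
  rcases eq_or_ne j p with hjp | hjp <;> rcases eq_or_ne j q with hjq | hjq <;>
    rcases eq_or_ne i p with hip | hip <;> rcases eq_or_ne i q with hiq | hiq <;>
      simp_all [lt_irrefl, hpq.not_gt, hpq] <;> split_ifs <;> ring

variable (d p q)

/-- The embedding as a monoid homomorphism from `SL(2,ℤ)`. -/
def Ehom (h : p ≠ q) : SL(2, ℤ) →* Matrix (Fin d) (Fin d) ℤ where
  toFun M := Emat d p q M.1
  map_one' := by exact Emat_one
  map_mul' M N := by exact Emat_mul h _ _

/-- The embedding as a homomorphism into the units of the matrix ring. -/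
noncomputable def Psi (h : p ≠ q) : SL(2, ℤ) →* (Matrix (Fin d) (Fin d) ℤ)ˣ :=
  (Ehom d p q h).toHomUnits

variable {d p q}

lemma Psi_coe (h : p ≠ q) (M : SL(2, ℤ)) :
    ((Psi d p q h M : (Matrix (Fin d) (Fin d) ℤ)ˣ) : Matrix (Fin d) (Fin d) ℤ)
      = Emat d p q M.1 := rfl

lemma Psi_inj (h : p ≠ q) : Function.Injective (Psi d p q h) := by
  intro M N hMN
  have hval : Emat d p q M.1 = Emat d p q N.1 := by
    rw [← Psi_coe h, ← Psi_coe h, hMN]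
  have e00 : M.1 0 0 = N.1 0 0 := by rw [← Emat_pp h M.1, hval, Emat_pp h]
  have e01 : M.1 0 1 = N.1 0 1 := by rw [← Emat_pq h M.1, hval, Emat_pq h]
  have e10 : M.1 1 0 = N.1 1 0 := by rw [← Emat_qp h M.1, hval, Emat_qp h]
  have e11 : M.1 1 1 = N.1 1 1 := by rw [← Emat_qq h M.1, hval, Emat_qq h]
  apply Subtype.ext
  rw [Matrix.eta_fin_two M.1, Matrix.eta_fin_two N.1, e00, e01, e10, e11]

lemma Psi_range (hpq : p < q) : (Psi d p q hpq.ne).range = Spq d p q := by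
  apply le_antisymm
  · rintro x ⟨M, rfl⟩
    have hM : M ∈ Subgroup.closure ({AA, BB} : Set SL(2, ℤ)) := by
      rw [closure_AA_BB]; trivial
    refine Subgroup.closure_induction (fun x hx => ?_) ?_ (fun x y _ _ ihx ihy => ?_)
      (fun x _ ihx => ?_) hM
    · apply Subgroup.subset_closure
      rcases hx with hx | hx
      · left; rw [Psi_coe, hx]; exact Emat_A hpq
      · right; rw [Psi_coe, hx]; exact Emat_B hpq
    · rw [_root_.map_one]; exact one_mem _
    · rw [_root_.map_mul]; exact mul_mem ihx ihy
    · rw [_root_.map_inv]; exact inv_mem ihx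
  · rw [Spq, Subgroup.closure_le]
    rintro u (hu | hu)
    · exact ⟨AA, Units.ext (by rw [Psi_coe]; exact (Emat_A hpq).trans hu.symm)⟩
    · exact ⟨BB, Units.ext (by rw [Psi_coe]; exact (Emat_B hpq).trans hu.symm)⟩

end Emb

/-- Every `B ∈ S_{p,q}` fixes `e_r` for `r ∉ {p,q}`, and `B ↦ B♯` (the `2×2` block on
rows and columns `p, q`) is a group isomorphism from `S_{p,q}` onto `SL(2,ℤ)`. -/
theorem Spq_iso_SL2 (d : ℕ) (hd : 2 ≤ d) (p q : Fin d) (hpq : p < q) :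
    (∀ B ∈ Spq d p q, ∀ r : Fin d, r ≠ p → r ≠ q →
      (B : Matrix (Fin d) (Fin d) ℤ).mulVec (Pi.single r 1) = Pi.single r 1) ∧
    ∃ φ : Spq d p q ≃* Matrix.SpecialLinearGroup (Fin 2) ℤ,
      ∀ B : Spq d p q, (φ B : Matrix (Fin 2) (Fin 2) ℤ) =
        !![((B : (Matrix (Fin d) (Fin d) ℤ)ˣ) : Matrix (Fin d) (Fin d) ℤ) p p,
           ((B : (Matrix (Fin d) (Fin d) ℤ)ˣ) : Matrix (Fin d) (Fin d) ℤ) p q;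
           ((B : (Matrix (Fin d) (Fin d) ℤ)ˣ) : Matrix (Fin d) (Fin d) ℤ) q p,
           ((B : (Matrix (Fin d) (Fin d) ℤ)ˣ) : Matrix (Fin d) (Fin d) ℤ) q q] := by
  have hne : p ≠ q := ne_of_lt hpq
  have hrange := Psi_range hpq
  constructor
  · intro B hB r hrp hrq
    rw [← hrange] at hB
    obtain ⟨M, hM⟩ := hB
    have hcol : ∀ i, (B : Matrix (Fin d) (Fin d) ℤ) i r = if i = r then 1 else 0 := by
      intro i
      rw [← hM, Psi_coe]
      exact Emat_col _ hrp hrq i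
    funext i
    rw [Matrix.mulVec_single]
    simp only [Pi.smul_apply, Matrix.col_apply, op_smul_eq_mul, hcol i, Pi.single_apply, mul_one]
  · refine ⟨(MulEquiv.subgroupCongr hrange.symm).trans
      (MonoidHom.ofInjective (Psi_inj hne)).symm, fun B => ?_⟩
    set φ := (MulEquiv.subgroupCongr hrange.symm).trans
      (MonoidHom.ofInjective (Psi_inj hne)).symm with hφ
    have hB : Psi d p q hne (φ B) = (B : (Matrix (Fin d) (Fin d) ℤ)ˣ) := by
      have h1 := MonoidHom.apply_ofInjective_symm (Psi_inj hne)
        (MulEquiv.subgroupCongr hrange.symm B)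
      rw [hφ]
      simpa [MulEquiv.subgroupCongr_apply] using h1
    have hval : ((B : (Matrix (Fin d) (Fin d) ℤ)ˣ) : Matrix (Fin d) (Fin d) ℤ)
        = Emat d p q (φ B).1 := by rw [← hB, Psi_coe]
    have h00 := (Emat_pp hne (φ B).1).symm
    have h01 := (Emat_pq hne (φ B).1).symm
    have h10 := (Emat_qp hne (φ B).1).symm
    have h11 := (Emat_qq hne (φ B).1).symm
    rw [hval, ← h00, ← h01, ← h10, ← h11]
    exact Matrix.eta_fin_two _
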